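/- arXiv:1101.0784 — 2 statements merged into one kernel-verified Lean document; each statement's English description precedes it below -/
import Mathlib

section
/- Let μ_ε be a family of finite positive measures on ℝ converging weak-* to μ as ε ↓ 0, all supported in a fixed compact set, with μ({0}) = 0. Then ∫ 2·arctan(ε⁻¹α) dμ_ε(α) → ∫ π·sgn(α) dμ(α) as ε ↓ 0. -/
open MeasureTheory Filter

open Real Topology

noncomputable def bump (δ x : ℝ) : ℝ := max 0 (min 1 (2 - |x|/δ))
noncomputable def clampf (δ x : ℝ) : ℝ := max (-1) (min 1 (x/δ))
noncomputable def cutf (R x : ℝ) : ℝ := max 0 (min 1 (R + 1 - |x|))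

lemma bump_cont (δ : ℝ) : Continuous (bump δ) := by unfold bump; fun_prop
lemma clampf_cont (δ : ℝ) : Continuous (clampf δ) := by unfold clampf; fun_prop
lemma cutf_cont (R : ℝ) : Continuous (cutf R) := by unfold cutf; fun_prop

lemma bump_nonneg (δ x : ℝ) : 0 ≤ bump δ x := le_max_left _ _
lemma bump_le_one (δ x : ℝ) : bump δ x ≤ 1 :=
  max_le zero_le_one (min_le_left _ _)
lemma bump_eq_one {δ x : ℝ} (hδ : 0 < δ) (hx : |x| ≤ δ) : bump δ x = 1 := by
  have h1 : |x|/δ ≤ 1 := (div_le_one hδ).2 hx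
  have : (1:ℝ) ≤ 2 - |x|/δ := by linarith
  simp [bump, min_eq_left this, max_eq_right (zero_le_one)]
lemma bump_eq_zero {δ x : ℝ} (hδ : 0 < δ) (hx : 2*δ ≤ |x|) : bump δ x = 0 := by
  have h1 : (2:ℝ) ≤ |x|/δ := (le_div_iff₀ hδ).2 (by linarith)
  have h2 : 2 - |x|/δ ≤ 0 := by linarith
  have : min 1 (2 - |x|/δ) ≤ 0 := le_trans (min_le_right _ _) h2
  simp [bump, max_eq_left this]
lemma bump_le_indicator {δ : ℝ} (hδ : 0 < δ) (x : ℝ) :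
    bump δ x ≤ Set.indicator (Set.Icc (-(2*δ)) (2*δ)) 1 x := by
  by_cases hx : x ∈ Set.Icc (-(2*δ)) (2*δ)
  · rw [Set.indicator_of_mem hx]; exact bump_le_one δ x
  · rw [Set.indicator_of_notMem hx]
    rw [Set.mem_Icc, ← abs_le] at hx
    exact le_of_eq (bump_eq_zero hδ (not_le.1 hx).le)

lemma clampf_abs_le (δ x : ℝ) : |clampf δ x| ≤ 1 := by
  rw [abs_le]
  constructor
  · exact le_max_left _ _
  · exact max_le (by norm_num) (min_le_left _ _)
lemma clampf_eq_one {δ x : ℝ} (hδ : 0 < δ) (hx : δ ≤ x) : clampf δ x = 1 := by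
  have : (1:ℝ) ≤ x/δ := (one_le_div hδ).2 hx
  simp [clampf, min_eq_left this, max_eq_right (by norm_num : (-1:ℝ) ≤ 1)]
lemma clampf_eq_neg_one {δ x : ℝ} (hδ : 0 < δ) (hx : x ≤ -δ) : clampf δ x = -1 := by
  have hx' : x/δ ≤ -1 := (div_le_iff₀ hδ).2 (by linarith)
  have : min 1 (x/δ) ≤ -1 := le_trans (min_le_right _ _) hx'
  simp [clampf, max_eq_left this]

lemma cutf_eq_one {R x : ℝ} (hx : |x| ≤ R) : cutf R x = 1 := by
  have : (1:ℝ) ≤ R + 1 - |x| := by linarith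
  simp [cutf, min_eq_left this, max_eq_right zero_le_one]
lemma cutf_nonneg (R x : ℝ) : 0 ≤ cutf R x := le_max_left _ _
lemma cutf_le_one (R x : ℝ) : cutf R x ≤ 1 := max_le zero_le_one (min_le_left _ _)
lemma cutf_support {R x : ℝ} (hx : x ∉ Set.Icc (-(R+1)) (R+1)) : cutf R x = 0 := by
  have h : R + 1 < |x| := by
    rcases not_and_or.1 hx with h | h
    · push_neg at h; exact lt_abs.2 (Or.inr (by linarith))
    · push_neg at h; exact lt_abs.2 (Or.inl h)
  have : min 1 (R + 1 - |x|) ≤ 0 := le_trans (min_le_right _ _) (by linarith)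
  simp [cutf, max_eq_left this]

lemma abs_two_arctan_le (t : ℝ) : |2 * arctan t| ≤ π := by
  rw [abs_mul, abs_two]
  have h : |arctan t| < π / 2 :=
    abs_lt.2 ⟨neg_pi_div_two_lt_arctan t, arctan_lt_pi_div_two t⟩
  linarith

lemma key_ineq_one {δ ε x : ℝ} (hδ : 0 < δ) (hε : 0 < ε) :
    |2 * arctan (ε⁻¹ * x) - π * clampf δ x| ≤
      2 * π * bump δ x + (π - 2 * arctan (ε⁻¹ * δ)) := by
  have hpos : (0:ℝ) < ε⁻¹ := inv_pos.2 hε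
  have harct : π - 2 * arctan (ε⁻¹ * δ) ≥ 0 := by
    have := arctan_lt_pi_div_two (ε⁻¹ * δ); linarith
  rcases le_or_gt |x| δ with hx | hx
  · -- |x| ≤ δ : bump = 1
    rw [bump_eq_one hδ hx]
    have h1 := abs_two_arctan_le (ε⁻¹ * x)
    have h2 : |π * clampf δ x| ≤ π := by
      rw [abs_mul, abs_of_pos pi_pos]
      nlinarith [clampf_abs_le δ x, pi_pos]
    calc |2 * arctan (ε⁻¹ * x) - π * clampf δ x|
        ≤ |2 * arctan (ε⁻¹ * x)| + |π * clampf δ x| := abs_sub _ _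
      _ ≤ 2 * π * 1 + (π - 2 * arctan (ε⁻¹ * δ)) := by linarith
  · have hb : 0 ≤ 2 * π * bump δ x := by
      have := bump_nonneg δ x; positivity
    rcases lt_abs.1 hx with hx' | hx'
    · -- δ < x
      rw [clampf_eq_one hδ hx'.le]
      have hmono : arctan (ε⁻¹ * δ) ≤ arctan (ε⁻¹ * x) :=
        arctan_strictMono.monotone (by nlinarith)
      have h1 := arctan_lt_pi_div_two (ε⁻¹ * x)
      rw [abs_of_nonpos (by linarith), mul_one]
      linarith
    · -- δ < -x, i.e. x < -δ
      rw [clampf_eq_neg_one hδ (by linarith)]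
      have hmono : arctan (ε⁻¹ * x) ≤ arctan (-(ε⁻¹ * δ)) :=
        arctan_strictMono.monotone (by nlinarith)
      rw [arctan_neg] at hmono
      have h2 := neg_pi_div_two_lt_arctan (ε⁻¹ * x)
      rw [mul_neg_one, sub_neg_eq_add, abs_of_nonneg (by linarith)]
      linarith

lemma real_sign_abs_le (x : ℝ) : |Real.sign x| ≤ 1 := by
  rcases Real.sign_apply_eq x with h | h | h <;> rw [h] <;> norm_num

lemma key_ineq_two {δ x : ℝ} (hδ : 0 < δ) :
    |π * clampf δ x - π * Real.sign x| ≤ 2 * π * bump δ x := by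
  rcases le_or_gt |x| δ with hx | hx
  · rw [bump_eq_one hδ hx]
    have h1 : |π * clampf δ x| ≤ π := by
      rw [abs_mul, abs_of_pos pi_pos]; nlinarith [clampf_abs_le δ x, pi_pos]
    have h2 : |π * Real.sign x| ≤ π := by
      rw [abs_mul, abs_of_pos pi_pos]; nlinarith [real_sign_abs_le x, pi_pos]
    calc |π * clampf δ x - π * Real.sign x| ≤ |π * clampf δ x| + |π * Real.sign x| := abs_sub _ _
      _ ≤ 2 * π * 1 := by linarith
  · have hb : 0 ≤ 2 * π * bump δ x := by have := bump_nonneg δ x; positivity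
    rcases lt_abs.1 hx with hx' | hx'
    · rw [clampf_eq_one hδ hx'.le, Real.sign_of_pos (by linarith)]
      simpa using hb
    · rw [clampf_eq_neg_one hδ (by linarith), Real.sign_of_neg (by linarith)]
      simpa using hb

lemma measurable_real_sign : Measurable Real.sign := by
  unfold Real.sign
  exact Measurable.ite (measurableSet_lt measurable_id measurable_const)
    measurable_const (Measurable.ite (measurableSet_lt measurable_const measurable_id)
      measurable_const measurable_const)

lemma abs_integral_sub_le_of_supp {ν : Measure ℝ} {S : Set ℝ} (hν : ν Sᶜ = 0)
    {F G B : ℝ → ℝ} (hF : Integrable F ν) (hG : Integrable G ν) (hB : Integrable B ν)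
    (hbd : ∀ x ∈ S, |F x - G x| ≤ B x) :
    |∫ x, F x ∂ν - ∫ x, G x ∂ν| ≤ ∫ x, B x ∂ν := by
  rw [← integral_sub hF hG]
  have hae : ∀ᵐ x ∂ν, x ∈ S := by
    rw [ae_iff]
    exact measure_mono_null (fun x hx => hx) hν
  calc |∫ x, (F x - G x) ∂ν| ≤ ∫ x, |F x - G x| ∂ν := by
        simpa [Real.norm_eq_abs] using norm_integral_le_integral_norm (μ := ν) (f := fun x => F x - G x)
    _ ≤ ∫ x, B x ∂ν := integral_mono_ae (hF.sub hG).abs hB (hae.mono fun x hx => hbd x hx)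

/-- Let `μ ε` be finite positive measures on `ℝ`, all supported in a fixed compact set
`S`, converging weak-* as `ε ↓ 0` to a finite measure `μ₀` with `μ₀({0}) = 0`.  Then
`∫ 2·arctan(ε⁻¹α) dμ_ε(α) → ∫ π·sgn(α) dμ₀(α)`. -/
theorem integral_arctan_tendsto_integral_sign
    (μ : ℝ → Measure ℝ) (μ₀ : Measure ℝ) [IsFiniteMeasure μ₀]
    (S : Set ℝ) (hS : IsCompact S)
    (hfin : ∀ ε ∈ Set.Ioi (0:ℝ), μ ε Set.univ ≠ ⊤)
    (hsupp : ∀ ε ∈ Set.Ioi (0:ℝ), μ ε Sᶜ = 0) (hsupp₀ : μ₀ Sᶜ = 0)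
    (hweak : ∀ f : ℝ → ℝ, Continuous f → HasCompactSupport f →
      Tendsto (fun ε => ∫ α, f α ∂(μ ε)) (nhdsWithin 0 (Set.Ioi 0))
        (nhds (∫ α, f α ∂μ₀)))
    (hzero : μ₀ {0} = 0) :
    Tendsto (fun ε : ℝ => ∫ α, 2 * Real.arctan (ε⁻¹ * α) ∂(μ ε))
      (nhdsWithin 0 (Set.Ioi 0))
      (nhds (∫ α, Real.pi * Real.sign α ∂μ₀)) := by

  -- a radius bound for S
  obtain ⟨R, hR⟩ := hS.isBounded.subset_closedBall 0
  have hRS : ∀ x ∈ S, |x| ≤ R := fun x hx => by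
    simpa [Real.dist_eq] using Metric.mem_closedBall.1 (hR hx)
  -- the cutoff function
  have hcut_cont : Continuous (cutf R) := cutf_cont R
  have hcut_cs : HasCompactSupport (cutf R) :=
    HasCompactSupport.intro isCompact_Icc (fun x hx => cutf_support hx)
  -- continuity from above at {0}
  have hInter : ⋂ n : ℕ, Set.Icc (-(1/((n:ℝ)+1))) (1/((n:ℝ)+1)) = {0} := by
    ext x
    simp only [Set.mem_iInter, Set.mem_Icc, Set.mem_singleton_iff, ← abs_le]
    constructor
    · intro h
      by_contra hx
      obtain ⟨n, hn⟩ := exists_nat_one_div_lt (abs_pos.2 hx)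
      exact absurd (h n) (not_le.2 hn)
    · rintro rfl n
      simp only [abs_zero]
      positivity
  have hseq : Tendsto (fun n : ℕ => μ₀ (Set.Icc (-(1/((n:ℝ)+1))) (1/((n:ℝ)+1)))) atTop (𝓝 0) := by
    have hanti : Antitone (fun n : ℕ => Set.Icc (-(1/((n:ℝ)+1))) (1/((n:ℝ)+1))) := by
      intro n m hnm
      have h1 : 1/((m:ℝ)+1) ≤ 1/((n:ℝ)+1) := by
        apply one_div_le_one_div_of_le (by positivity)
        have : (n:ℝ) ≤ (m:ℝ) := Nat.cast_le.2 hnm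
        linarith
      exact Set.Icc_subset_Icc (by linarith) h1
    have := tendsto_measure_iInter_atTop (μ := μ₀)
      (s := fun n : ℕ => Set.Icc (-(1/((n:ℝ)+1))) (1/((n:ℝ)+1)))
      (fun n => measurableSet_Icc.nullMeasurableSet) hanti ⟨0, measure_ne_top μ₀ _⟩
    rw [hInter, hzero] at this
    exact this
  rw [Metric.tendsto_nhds]
  intro η hη
  -- choose δ
  set e : ℝ := η / (4*π+1) with he_def
  have hπ : (0:ℝ) < π := pi_pos
  have he : 0 < e := by positivity
  obtain ⟨n, hn⟩ := (hseq.eventually_lt_const (ENNReal.ofReal_pos.2 he)).exists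
  set δ : ℝ := 1/(2*((n:ℝ)+1)) with hδ_def
  have hδ : 0 < δ := by positivity
  have h2δ : 2*δ = 1/((n:ℝ)+1) := by rw [hδ_def]; field_simp
  set c : ℝ := (μ₀ (Set.Icc (-(2*δ)) (2*δ))).toReal with hc_def
  have hc : c < e := by
    rw [hc_def, h2δ]
    exact ENNReal.toReal_lt_of_lt_ofReal hn
  have hc0 : 0 ≤ c := ENNReal.toReal_nonneg
  have hcη : 4*π*c < η := by
    have h1 : (4*π+1)*e = η := by rw [he_def]; field_simp
    nlinarith
  -- the approximating functions
  set g : ℝ → ℝ := bump δ with hg_def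
  set f : ℝ → ℝ := fun x => π * clampf δ x * cutf R x with hf_def
  have hg_cont : Continuous g := bump_cont δ
  have hg_cs : HasCompactSupport g :=
    HasCompactSupport.intro isCompact_Icc (fun x hx => by
      rw [Set.mem_Icc, ← abs_le] at hx
      exact bump_eq_zero hδ (not_le.1 hx).le)
  have hf_cont : Continuous f := by
    apply Continuous.mul (Continuous.mul continuous_const (clampf_cont δ)) hcut_cont
  have hf_cs : HasCompactSupport f :=
    HasCompactSupport.intro (isCompact_Icc (a := -(R+1)) (b := R+1)) (fun x hx => by
      rw [hf_def]; simp [cutf_support hx])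
  -- integral of g against μ₀ is at most c
  have hg₀_int : Integrable g μ₀ := hg_cont.integrable_of_hasCompactSupport hg_cs
  have hf₀_int : Integrable f μ₀ := hf_cont.integrable_of_hasCompactSupport hf_cs
  have hIg₀ : ∫ x, g x ∂μ₀ ≤ c := by
    calc ∫ x, g x ∂μ₀ ≤ ∫ x, Set.indicator (Set.Icc (-(2*δ)) (2*δ)) 1 x ∂μ₀ :=
          integral_mono hg₀_int ((integrable_const (1:ℝ)).indicator measurableSet_Icc)
            (bump_le_indicator hδ)
      _ = c := integral_indicator_one measurableSet_Icc
  -- the bound function of ε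
  set bound : ℝ → ℝ := fun ε =>
    (2*π * ∫ x, g x ∂(μ ε) + (π - 2 * arctan (ε⁻¹ * δ)) * ∫ x, cutf R x ∂(μ ε))
    + |(∫ x, f x ∂(μ ε)) - ∫ x, f x ∂μ₀| + 2*π * ∫ x, g x ∂μ₀ with hbound_def
  have harctan : Tendsto (fun ε : ℝ => π - 2 * arctan (ε⁻¹ * δ))
      (nhdsWithin 0 (Set.Ioi 0)) (𝓝 0) := by
    have h1 : Tendsto (fun ε : ℝ => ε⁻¹ * δ) (nhdsWithin 0 (Set.Ioi 0)) atTop := by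
      have := tendsto_inv_nhdsGT_zero.atTop_mul_const' hδ
      simpa using this
    have h2 : Tendsto (fun ε : ℝ => arctan (ε⁻¹ * δ)) (nhdsWithin 0 (Set.Ioi 0)) (𝓝 (π/2)) :=
      (tendsto_nhds_of_tendsto_nhdsWithin tendsto_arctan_atTop).comp h1
    have := (tendsto_const_nhds (x := π) (f := nhdsWithin (0:ℝ) (Set.Ioi 0))).sub
      (h2.const_mul 2)
    have heq : π - 2 * (π/2) = 0 := by ring
    rw [heq] at this
    exact this
  have hbound_tendsto : Tendsto bound (nhdsWithin 0 (Set.Ioi 0))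
      (𝓝 ((2*π * ∫ x, g x ∂μ₀ + 0 * ∫ x, cutf R x ∂μ₀) + |(∫ x, f x ∂μ₀) - ∫ x, f x ∂μ₀|
        + 2*π * ∫ x, g x ∂μ₀)) := by
    apply Tendsto.add
    apply Tendsto.add
    · exact ((hweak g hg_cont hg_cs).const_mul _).add
        (harctan.mul (hweak (cutf R) hcut_cont hcut_cs))
    · exact ((hweak f hf_cont hf_cs).sub_const _).abs
    · exact tendsto_const_nhds
  have hlim_lt : (2*π * ∫ x, g x ∂μ₀ + 0 * ∫ x, cutf R x ∂μ₀) + |(∫ x, f x ∂μ₀) - ∫ x, f x ∂μ₀|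
        + 2*π * ∫ x, g x ∂μ₀ < η := by
    simp only [zero_mul, add_zero, sub_self, abs_zero]
    nlinarith [hIg₀]
  filter_upwards [hbound_tendsto.eventually_lt_const hlim_lt, self_mem_nhdsWithin] with ε h1 hε
  rw [Real.dist_eq]
  refine lt_of_le_of_lt ?_ h1
  -- per-ε estimate
  have hε' : (0:ℝ) < ε := hε
  haveI : IsFiniteMeasure (μ ε) := ⟨lt_top_iff_ne_top.2 (hfin ε hε)⟩
  have harc_int : Integrable (fun x => 2 * arctan (ε⁻¹ * x)) (μ ε) := by
    apply Integrable.mono' (integrable_const π)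
      (continuous_const.mul (Real.continuous_arctan.comp (continuous_const.mul continuous_id))).aestronglyMeasurable
    filter_upwards with x
    rw [Real.norm_eq_abs]
    exact abs_two_arctan_le (ε⁻¹ * x)
  have hf_int : Integrable f (μ ε) := hf_cont.integrable_of_hasCompactSupport hf_cs
  have hg_int : Integrable g (μ ε) := hg_cont.integrable_of_hasCompactSupport hg_cs
  have hh_int : Integrable (cutf R) (μ ε) := hcut_cont.integrable_of_hasCompactSupport hcut_cs
  have hsgn₀_int : Integrable (fun x => π * Real.sign x) μ₀ := by
    apply Integrable.mono' (integrable_const π)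
      ((measurable_const.mul measurable_real_sign).aestronglyMeasurable)
    filter_upwards with x
    simp only [Pi.mul_apply]
    rw [Real.norm_eq_abs, abs_mul, abs_of_pos hπ]
    nlinarith [real_sign_abs_le x]
  -- |A - B| ≤ first part
  have hAB : |(∫ x, 2 * arctan (ε⁻¹ * x) ∂(μ ε)) - ∫ x, f x ∂(μ ε)| ≤
      2*π * ∫ x, g x ∂(μ ε) + (π - 2 * arctan (ε⁻¹ * δ)) * ∫ x, cutf R x ∂(μ ε) := by
    have := abs_integral_sub_le_of_supp (hsupp ε hε) harc_int hf_int
      ((hg_int.const_mul (2*π)).add (hh_int.const_mul (π - 2 * arctan (ε⁻¹ * δ))))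
      (fun x hx => by
        rw [hf_def]
        simp only
        rw [cutf_eq_one (hRS x hx), mul_one]
        have := key_ineq_one (x := x) hδ hε'
        calc |2 * arctan (ε⁻¹ * x) - π * clampf δ x|
            ≤ 2 * π * bump δ x + (π - 2 * arctan (ε⁻¹ * δ)) := this
          _ = 2*π * g x + (π - 2 * arctan (ε⁻¹ * δ)) * cutf R x := by
              rw [cutf_eq_one (hRS x hx), hg_def]; ring)
    calc |(∫ x, 2 * arctan (ε⁻¹ * x) ∂(μ ε)) - ∫ x, f x ∂(μ ε)|
        ≤ ∫ x, (2*π * g x + (π - 2 * arctan (ε⁻¹ * δ)) * cutf R x) ∂(μ ε) := this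
      _ = 2*π * ∫ x, g x ∂(μ ε) + (π - 2 * arctan (ε⁻¹ * δ)) * ∫ x, cutf R x ∂(μ ε) := by
          rw [integral_add (hg_int.const_mul (2*π)) (hh_int.const_mul _),
            integral_const_mul, integral_const_mul]
  -- |C - D| ≤ last part
  have hCD : |(∫ x, f x ∂μ₀) - ∫ x, π * Real.sign x ∂μ₀| ≤ 2*π * ∫ x, g x ∂μ₀ := by
    have := abs_integral_sub_le_of_supp hsupp₀ hf₀_int hsgn₀_int (hg₀_int.const_mul (2*π))
      (fun x hx => by
        rw [hf_def]
        simp only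
        rw [cutf_eq_one (hRS x hx), mul_one]
        have := key_ineq_two (x := x) hδ
        calc |π * clampf δ x - π * Real.sign x| ≤ 2 * π * bump δ x := this
          _ = 2*π * g x := by rw [hg_def])
    calc |(∫ x, f x ∂μ₀) - ∫ x, π * Real.sign x ∂μ₀|
        ≤ ∫ x, 2*π * g x ∂μ₀ := this
      _ = 2*π * ∫ x, g x ∂μ₀ := integral_const_mul _ _
  -- assemble
  rw [hbound_def]
  have tri : |(∫ x, 2 * arctan (ε⁻¹ * x) ∂(μ ε)) - ∫ x, π * Real.sign x ∂μ₀| ≤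
      |(∫ x, 2 * arctan (ε⁻¹ * x) ∂(μ ε)) - ∫ x, f x ∂(μ ε)|
      + |(∫ x, f x ∂(μ ε)) - ∫ x, f x ∂μ₀|
      + |(∫ x, f x ∂μ₀) - ∫ x, π * Real.sign x ∂μ₀| := by
    have h1 := abs_sub_le (∫ x, 2 * arctan (ε⁻¹ * x) ∂(μ ε)) (∫ x, f x ∂(μ ε))
      (∫ x, π * Real.sign x ∂μ₀)
    have h2 := abs_sub_le (∫ x, f x ∂(μ ε)) (∫ x, f x ∂μ₀) (∫ x, π * Real.sign x ∂μ₀)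
    linarith
  calc |(∫ x, 2 * arctan (ε⁻¹ * x) ∂(μ ε)) - ∫ x, π * Real.sign x ∂μ₀| ≤ _ := tri
    _ ≤ _ := by
        exact add_le_add (add_le_add hAB le_rfl) hCD
end

section
/- Let u₀: ℝ → ℝ be C¹ with bounded derivative, and fix real times t₁,…,t_K. If Σ_{k=1}^{K} (k+1)|t_k| · k · M^{k-1} · ‖u₀'‖_∞ < 1 where M bounds |u_B| ≤ M on the relevant range, then for each x ∈ ℝ the implicit equation u = u₀(x - Σ_{k=1}^K (k+1) u^k t_k) has exactly one solution u with |u| ≤ M. -/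
lemma lip_of_deriv_bound (f f' : ℝ → ℝ) (B : ℝ)
    (hderiv : ∀ x, HasDerivAt f (f' x) x) (hB : ∀ x, |f' x| ≤ B) :
    ∀ a b : ℝ, |f a - f b| ≤ B * |a - b| := by
  intro a b
  have := Convex.norm_image_sub_le_of_norm_hasDerivWithin_le
    (f := f) (f' := f') (C := B) (s := Set.univ)
    (fun x _ => (hderiv x).hasDerivWithinAt)
    (fun x _ => hB x) convex_univ (Set.mem_univ b) (Set.mem_univ a)
  simpa [Real.norm_eq_abs] using this

lemma pow_lip (M : ℝ) (n : ℕ) {u v : ℝ} (hu : |u| ≤ M) (hv : |v| ≤ M) :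
    |u ^ (n + 1) - v ^ (n + 1)| ≤ ((n : ℝ) + 1) * M ^ n * |u - v| := by
  have hM0 : (0:ℝ) ≤ M := le_trans (abs_nonneg u) hu
  have := Convex.norm_image_sub_le_of_norm_hasDerivWithin_le
    (f := fun y : ℝ => y ^ (n + 1)) (f' := fun y : ℝ => ((n:ℝ) + 1) * y ^ n)
    (C := ((n:ℝ) + 1) * M ^ n) (s := Set.Icc (-M) M)
    (fun y _ => by simpa using (hasDerivAt_pow (n+1) y).hasDerivWithinAt)
    (fun y hy => by
      have hyM : |y| ≤ M := abs_le.2 ⟨hy.1, hy.2⟩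
      have : |y ^ n| ≤ M ^ n := by
        rw [abs_pow]; exact pow_le_pow_left₀ (abs_nonneg y) hyM n
      calc ‖((n:ℝ) + 1) * y ^ n‖ = ((n:ℝ)+1) * |y ^ n| := by
            rw [Real.norm_eq_abs, abs_mul, abs_of_nonneg (by positivity : (0:ℝ) ≤ (n:ℝ)+1)]
        _ ≤ ((n:ℝ)+1) * M ^ n := by
            exact mul_le_mul_of_nonneg_left this (by positivity))
    (convex_Icc _ _) (abs_le.1 hv) (abs_le.1 hu)
  simpa [Real.norm_eq_abs] using this

/-- Pre-breaking uniqueness for the implicit solution of the inviscid Burgers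
hierarchy.  If `u₀` is `C¹` with `|u₀'| ≤ B`, `|u₀| ≤ M`, and the contraction
condition `(Σ_{k=1}^K (k+1)|t_k|·k·M^{k-1})·B < 1` holds (index `i = k-1`), then for
each `x` the equation `u = u₀(x - Σ_{k=1}^K (k+1)u^k t_k)` has exactly one solution
with `|u| ≤ M`. -/
theorem burgers_implicit_unique_solution
    (K : ℕ) (u₀ u₀' : ℝ → ℝ) (t : ℕ → ℝ) (M B : ℝ)
    (hderiv : ∀ x, HasDerivAt u₀ (u₀' x) x)
    (hB : ∀ x, |u₀' x| ≤ B)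
    (hM : ∀ x, |u₀ x| ≤ M)
    (hcontr : (∑ i ∈ Finset.range K, ((i:ℝ) + 2) * |t i| * ((i:ℝ) + 1) * M ^ i) * B < 1) :
    ∀ x : ℝ, ∃! u : ℝ, |u| ≤ M ∧
      u = u₀ (x - ∑ i ∈ Finset.range K, ((i:ℝ) + 2) * u ^ (i + 1) * t i) := by
  intro x
  have hM0 : (0:ℝ) ≤ M := le_trans (abs_nonneg _) (hM 0)
  have hB0 : (0:ℝ) ≤ B := le_trans (abs_nonneg _) (hB 0)
  set L : ℝ := (∑ i ∈ Finset.range K, ((i:ℝ) + 2) * |t i| * ((i:ℝ) + 1) * M ^ i) * B with hL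
  have hL0 : 0 ≤ L := by
    apply mul_nonneg _ hB0
    apply Finset.sum_nonneg
    intro i _; positivity
  set S : ℝ → ℝ := fun u => ∑ i ∈ Finset.range K, ((i:ℝ) + 2) * u ^ (i + 1) * t i with hS
  set g : ℝ → ℝ := fun u => u₀ (x - S u) with hg
  -- key Lipschitz estimate on [-M, M]
  have key : ∀ u v : ℝ, |u| ≤ M → |v| ≤ M → |g u - g v| ≤ L * |u - v| := by
    intro u v hu hv
    have h1 : |g u - g v| ≤ B * |(x - S u) - (x - S v)| :=
      lip_of_deriv_bound u₀ u₀' B hderiv hB _ _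
    have h2 : |(x - S u) - (x - S v)| = |S v - S u| := by ring_nf
    have h3 : |S v - S u| ≤ (∑ i ∈ Finset.range K,
        ((i:ℝ) + 2) * |t i| * ((i:ℝ) + 1) * M ^ i) * |u - v| := by
      have : S v - S u = ∑ i ∈ Finset.range K,
          ((i:ℝ) + 2) * (v ^ (i+1) - u ^ (i+1)) * t i := by
        rw [hS]; simp only [← Finset.sum_sub_distrib]
        exact Finset.sum_congr rfl fun i _ => by ring
      rw [this, Finset.sum_mul]
      refine le_trans (Finset.abs_sum_le_sum_abs _ _) (Finset.sum_le_sum ?_)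
      intro i _
      have hp : |v ^ (i+1) - u ^ (i+1)| ≤ ((i:ℝ) + 1) * M ^ i * |v - u| :=
        pow_lip M i hv hu
      have hvu : |v - u| = |u - v| := abs_sub_comm _ _
      calc |((i:ℝ) + 2) * (v ^ (i+1) - u ^ (i+1)) * t i|
          = ((i:ℝ) + 2) * |v ^ (i+1) - u ^ (i+1)| * |t i| := by
            rw [abs_mul, abs_mul, abs_of_nonneg (by positivity : (0:ℝ) ≤ (i:ℝ)+2)]
        _ ≤ ((i:ℝ) + 2) * (((i:ℝ) + 1) * M ^ i * |u - v|) * |t i| := by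
            rw [hvu] at hp
            exact mul_le_mul_of_nonneg_right
              (mul_le_mul_of_nonneg_left hp (by positivity)) (abs_nonneg _)
        _ = ((i:ℝ) + 2) * |t i| * ((i:ℝ) + 1) * M ^ i * |u - v| := by ring
    calc |g u - g v| ≤ B * |S v - S u| := by rw [← h2]; exact h1
      _ ≤ B * ((∑ i ∈ Finset.range K,
            ((i:ℝ) + 2) * |t i| * ((i:ℝ) + 1) * M ^ i) * |u - v|) :=
          mul_le_mul_of_nonneg_left h3 hB0
      _ = L * |u - v| := by rw [hL]; ring
  -- continuity of g
  have hcont : Continuous g := by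
    have hu₀ : Continuous u₀ := continuous_iff_continuousAt.2 fun y => (hderiv y).continuousAt
    apply hu₀.comp
    exact continuous_const.sub (continuous_finset_sum _ fun i _ => by fun_prop)
  -- existence via IVT on h(u) = g u - u
  have hcont' : ContinuousOn (fun u => g u - u) (Set.Icc (-M) M) :=
    (hcont.sub continuous_id).continuousOn
  have hivt : (0:ℝ) ∈ Set.Icc ((fun u => g u - u) M) ((fun u => g u - u) (-M)) := by
    constructor
    · have := hM (x - S M); simp only
      have : g M ≤ M := (abs_le.1 (hM _)).2
      linarith
    · have : -M ≤ g (-M) := (abs_le.1 (hM _)).1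
      simp only; linarith
  obtain ⟨u, huIcc, hu0⟩ := intermediate_value_Icc' (by linarith : -M ≤ M) hcont' hivt
  have huM : |u| ≤ M := abs_le.2 ⟨huIcc.1, huIcc.2⟩
  have hufix : u = g u := by
    have : g u - u = 0 := hu0
    linarith
  refine ⟨u, ⟨huM, hufix⟩, ?_⟩
  rintro v ⟨hvM, hvfix⟩
  have h := key v u hvM huM
  simp only [hg, hS] at h hufix
  rw [← hvfix, ← hufix] at h
  by_contra hne
  have hpos : 0 < |v - u| := abs_pos.2 (sub_ne_zero.2 hne)
  have : |v - u| < |v - u| := lt_of_le_of_lt h (by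
    calc L * |v - u| < 1 * |v - u| := (mul_lt_mul_of_pos_right hcontr hpos)
      _ = |v - u| := one_mul _)
  exact lt_irrefl _ this
end
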